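/- The number e · ∫_0^1 e^{-1/x}/x dx satisfies 1/2 < e · ∫_0^1 e^{-1/x}/x dx < 1. -/

import Mathlib

open Real Set MeasureTheory Filter intervalIntegral

noncomputable def hk : ℝ → ℝ := fun x => if 0 < x then Real.exp (-x⁻¹) else 0
noncomputable def Fk : ℝ → ℝ := fun x => if 0 < x then Real.exp (-x⁻¹) / x else 0
noncomputable def Ak : ℝ → ℝ := fun x => if 0 < x then Real.exp (-x⁻¹) / x ^ 2 else 0
noncomputable def Bk : ℝ → ℝ := fun x => Fk x - 3/2 * x * (1 - x) * hk x
noncomputable def gk : ℝ → ℝ := fun x => (x - x ^ 2 + x ^ 3 / 2) * hk x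

lemma exp_neg_inv_le {x : ℝ} (hx : 0 < x) : Real.exp (-x⁻¹) ≤ 27 * x ^ 3 := by
  have h1 : x⁻¹ / 3 + 1 ≤ Real.exp (x⁻¹ / 3) := Real.add_one_le_exp _
  have h2 : x⁻¹ / 3 ≤ Real.exp (x⁻¹ / 3) := by linarith
  have hE : (x⁻¹ / 3) ^ 3 ≤ Real.exp x⁻¹ := by
    have he : Real.exp x⁻¹ = Real.exp (x⁻¹/3) * Real.exp (x⁻¹/3) * Real.exp (x⁻¹/3) := by
      rw [← Real.exp_add, ← Real.exp_add]; ring_nf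
    rw [he, pow_succ, pow_two]
    gcongr <;> positivity
  have hxi : (x⁻¹ / 3) ^ 3 = 1 / (27 * x ^ 3) := by
    field_simp; ring
  rw [hxi] at hE
  rw [Real.exp_neg]
  calc (Real.exp x⁻¹)⁻¹ ≤ (1 / (27 * x ^ 3))⁻¹ := inv_anti₀ (by positivity) hE
    _ = 27 * x ^ 3 := by field_simp

lemma exp_neg_inv_le_one {x : ℝ} (hx : 0 < x) : Real.exp (-x⁻¹) ≤ 1 :=
  Real.exp_le_one_iff.2 (neg_nonpos.2 (by positivity))

lemma cont_aux (G : ℝ → ℝ) (h0 : ∀ x, 0 ≤ G x) (h1 : ∀ x, 0 < x → G x ≤ 27 * x)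
    (h2 : ∀ x, ¬ 0 < x → G x = 0) : Filter.Tendsto G (nhds 0) (nhds 0) := by
  apply squeeze_zero h0 (g := fun x => 27 * |x|)
  · intro t
    by_cases ht : 0 < t
    · calc G t ≤ 27 * t := h1 t ht
        _ ≤ 27 * |t| := by gcongr; exact le_abs_self t
    · rw [h2 t ht]; positivity
  · have : Filter.Tendsto (fun x : ℝ => 27 * |x|) (nhds 0) (nhds (27 * |(0:ℝ)|)) :=
      (continuous_const.mul continuous_abs).tendsto 0
    simpa using this

lemma cont_of (G : ℝ → ℝ) (h0 : ∀ x, 0 ≤ G x) (h1 : ∀ x, 0 < x → G x ≤ 27 * x)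
    (h2 : ∀ x, ¬ 0 < x → G x = 0)
    (h3 : ∀ x : ℝ, 0 < x → ∃ H : ℝ → ℝ, ContinuousAt H x ∧ ∀ y, 0 < y → G y = H y) :
    Continuous G := by
  rw [continuous_iff_continuousAt]
  intro x
  rcases lt_trichotomy x 0 with hx | hx | hx
  · have hev : G =ᶠ[nhds x] fun _ => (0:ℝ) := by
      filter_upwards [Iio_mem_nhds hx] with y hy
      exact h2 y (not_lt.2 (le_of_lt (mem_Iio.mp hy)))
    exact continuousAt_const.congr hev.symm
  · subst hx
    have ht : Filter.Tendsto G (nhds 0) (nhds 0) := cont_aux G h0 h1 h2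
    have hG0 : G 0 = 0 := h2 0 (lt_irrefl 0)
    rw [ContinuousAt, hG0]; exact ht
  · obtain ⟨H, hH, hGH⟩ := h3 x hx
    have hev : G =ᶠ[nhds x] H := by
      filter_upwards [Ioi_mem_nhds hx] with y hy
      exact hGH y (mem_Ioi.mp hy)
    exact hH.congr hev.symm

lemma hk_cont : Continuous hk := by
  apply cont_of
  · intro y; unfold hk; split <;> positivity
  · intro y hy
    simp only [hk, if_pos hy]
    rcases le_or_gt y 1 with h | h
    · calc Real.exp (-y⁻¹) ≤ 27 * y ^ 3 := exp_neg_inv_le hy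
        _ ≤ 27 * y := by nlinarith [mul_nonneg (mul_nonneg hy.le (sub_nonneg.2 h)) (by linarith : (0:ℝ) ≤ 1 + y)]
    · calc Real.exp (-y⁻¹) ≤ 1 := exp_neg_inv_le_one hy
        _ ≤ 27 * y := by nlinarith
  · intro y hy; simp [hk, hy]
  · intro x hx
    refine ⟨fun y => Real.exp (-y⁻¹), ?_, fun y hy => by simp [hk, hy]⟩
    exact Real.continuous_exp.continuousAt.comp ((continuousAt_inv₀ hx.ne').neg)

lemma Fk_cont : Continuous Fk := by
  apply cont_of
  · intro y; unfold Fk; split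
    · positivity
    · exact le_refl 0
  · intro y hy
    simp only [Fk, if_pos hy]
    rw [div_le_iff₀ hy]
    rcases le_or_gt y 1 with h | h
    · calc Real.exp (-y⁻¹) ≤ 27 * y ^ 3 := exp_neg_inv_le hy
        _ ≤ 27 * y * y := by nlinarith [mul_nonneg (sq_nonneg y) (sub_nonneg.2 h)]
    · calc Real.exp (-y⁻¹) ≤ 1 := exp_neg_inv_le_one hy
        _ ≤ 27 * y * y := by nlinarith
  · intro y hy; simp [Fk, hy]
  · intro x hx
    refine ⟨fun y => Real.exp (-y⁻¹) / y, ?_, fun y hy => by simp [Fk, hy]⟩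
    exact (Real.continuous_exp.continuousAt.comp ((continuousAt_inv₀ hx.ne').neg)).div
      continuousAt_id hx.ne'

lemma Ak_cont : Continuous Ak := by
  apply cont_of
  · intro y; unfold Ak; split
    · positivity
    · exact le_refl 0
  · intro y hy
    simp only [Ak, if_pos hy]
    rw [div_le_iff₀ (by positivity)]
    calc Real.exp (-y⁻¹) ≤ 27 * y ^ 3 := exp_neg_inv_le hy
      _ ≤ 27 * y * y ^ 2 := by nlinarith
  · intro y hy; simp [Ak, hy]
  · intro x hx
    refine ⟨fun y => Real.exp (-y⁻¹) / y ^ 2, ?_, fun y hy => by simp [Ak, hy]⟩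
    exact (Real.continuous_exp.continuousAt.comp ((continuousAt_inv₀ hx.ne').neg)).div
      (continuousAt_pow x 2) (by positivity)

lemma Bk_cont : Continuous Bk :=
  Fk_cont.sub ((continuous_const.mul continuous_id |>.mul (continuous_const.sub continuous_id)).mul hk_cont)

lemma hk_deriv (x : ℝ) : HasDerivAt hk (Ak x) x := by
  rcases lt_trichotomy x 0 with hx | hx | hx
  · have hev : hk =ᶠ[nhds x] fun _ => (0:ℝ) := by
      filter_upwards [Iio_mem_nhds hx] with y hy
      simp [hk, not_lt.2 (le_of_lt (mem_Iio.mp hy))]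
    have : HasDerivAt (fun _ : ℝ => (0:ℝ)) (Ak x) x := by
      simpa [Ak, not_lt.2 hx.le] using hasDerivAt_const x (0:ℝ)
    exact this.congr_of_eventuallyEq hev
  · subst hx
    rw [hasDerivAt_iff_tendsto_slope]
    have hsl : ∀ y : ℝ, y ≠ 0 → slope hk 0 y = Fk y := by
      intro y hy
      rw [slope_def_field]
      have hk0 : hk 0 = 0 := by simp [hk]
      rcases lt_or_ge 0 y with h | h
      · simp [hk0, hk, Fk, h, div_eq_mul_inv]
      · simp [hk0, hk, Fk, not_lt.2 h, div_eq_mul_inv]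
    have hF : Filter.Tendsto Fk (nhds 0) (nhds 0) := by
      have := Fk_cont.tendsto 0
      simpa [Fk] using this
    have hA0 : Ak 0 = 0 := by simp [Ak]
    rw [hA0]
    refine Filter.Tendsto.congr' ?_ (hF.mono_left nhdsWithin_le_nhds)
    filter_upwards [self_mem_nhdsWithin] with y hy
    exact (hsl y hy).symm
  · have h1 : HasDerivAt (fun y : ℝ => -y⁻¹) ((x ^ 2)⁻¹) x := by
      exact (hasDerivAt_inv hx.ne').neg.congr_deriv (by simp)
    have h2 := h1.exp
    have hev : (fun y : ℝ => Real.exp (-y⁻¹)) =ᶠ[nhds x] hk := by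
      filter_upwards [Ioi_mem_nhds hx] with y hy
      simp [hk, mem_Ioi.mp hy]
    have := h2.congr_of_eventuallyEq hev.symm
    simpa [Ak, hx, div_eq_mul_inv] using this

lemma gk_deriv (x : ℝ) : HasDerivAt gk (Bk x) x := by
  have hp : HasDerivAt (fun y : ℝ => y - y ^ 2 + y ^ 3 / 2) (1 - 2 * x + 3 * x ^ 2 / 2) x := by
    have := (((hasDerivAt_id x).sub (hasDerivAt_pow 2 x)).add ((hasDerivAt_pow 3 x).div_const 2))
    exact this.congr_deriv (by norm_num)
  have hprod := hp.mul (hk_deriv x)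
  have heq : (1 - 2 * x + 3 * x ^ 2 / 2) * hk x + (x - x ^ 2 + x ^ 3 / 2) * Ak x = Bk x := by
    by_cases hx : 0 < x
    · simp only [hk, Ak, Bk, Fk, if_pos hx]
      have hx0 : x ≠ 0 := hx.ne'
      field_simp
      ring
    · simp [hk, Ak, Bk, Fk, hx]
  rw [← heq]
  exact hprod

lemma integral_Ak : ∫ x in (0:ℝ)..1, Ak x = Real.exp (-1) := by
  rw [intervalIntegral.integral_eq_sub_of_hasDerivAt (fun x _ => hk_deriv x)
    (Ak_cont.intervalIntegrable 0 1)]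
  simp [hk]

lemma integral_Bk : ∫ x in (0:ℝ)..1, Bk x = Real.exp (-1) / 2 := by
  rw [intervalIntegral.integral_eq_sub_of_hasDerivAt (fun x _ => gk_deriv x)
    (Bk_cont.intervalIntegrable 0 1)]
  have : gk 1 = Real.exp (-1) / 2 := by
    simp [gk, hk]; ring
  have h0 : gk 0 = 0 := by simp [gk]
  rw [this, h0, sub_zero]

lemma lower : Real.exp (-1) / 2 < ∫ x in (0:ℝ)..1, Fk x := by
  rw [← integral_Bk]
  apply intervalIntegral.integral_lt_integral_of_continuousOn_of_le_of_exists_lt zero_lt_one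
    Bk_cont.continuousOn Fk_cont.continuousOn
  · intro x hx
    have hx0 : 0 < x := hx.1
    have hx1 : x ≤ 1 := hx.2
    have hh : 0 ≤ hk x := by unfold hk; split <;> positivity
    have : 0 ≤ 3/2 * x * (1 - x) * hk x :=
      mul_nonneg (mul_nonneg (mul_nonneg (by norm_num) hx0.le) (by linarith)) hh
    simp only [Bk]; linarith
  · refine ⟨1/2, by norm_num, ?_⟩
    have hh : (0:ℝ) < hk (1/2) := by norm_num [hk]; positivity
    simp only [Bk]
    nlinarith
  
lemma upper : (∫ x in (0:ℝ)..1, Fk x) < Real.exp (-1) := by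
  rw [← integral_Ak]
  apply intervalIntegral.integral_lt_integral_of_continuousOn_of_le_of_exists_lt zero_lt_one
    Fk_cont.continuousOn Ak_cont.continuousOn
  · intro x hx
    have hx0 : 0 < x := hx.1
    have hx1 : x ≤ 1 := hx.2
    simp only [Fk, Ak, if_pos hx0]
    apply div_le_div_of_nonneg_left (Real.exp_pos _).le (by positivity)
    nlinarith
  · refine ⟨1/2, by norm_num, ?_⟩
    have h0 : (0:ℝ) < 1/2 := by norm_num
    simp only [Fk, Ak, if_pos h0]
    rw [div_lt_div_iff₀ (by norm_num) (by norm_num)]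
    nlinarith [Real.exp_pos (-(1/2:ℝ))⁻¹]

theorem gompertz_bounds :
    1 / 2 < Real.exp 1 * ∫ x in Set.Ioo (0 : ℝ) 1, Real.exp (-1 / x) / x ∧
    Real.exp 1 * (∫ x in Set.Ioo (0 : ℝ) 1, Real.exp (-1 / x) / x) < 1 := by
  have hIeq : (∫ x in Set.Ioo (0 : ℝ) 1, Real.exp (-1 / x) / x) = ∫ x in (0:ℝ)..1, Fk x := by
    rw [intervalIntegral.integral_of_le zero_le_one, MeasureTheory.integral_Ioc_eq_integral_Ioo]
    apply MeasureTheory.setIntegral_congr_fun measurableSet_Ioo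
    intro x hx
    simp [Fk, hx.1, neg_div, one_div]
  have he : Real.exp 1 * Real.exp (-1) = 1 := by
    rw [← Real.exp_add]; norm_num
  have hep : (0:ℝ) < Real.exp 1 := Real.exp_pos 1
  constructor
  · rw [hIeq]
    have := mul_lt_mul_of_pos_left lower hep
    calc (1:ℝ)/2 = Real.exp 1 * (Real.exp (-1) / 2) := by rw [mul_div_assoc'] at *; rw [he]  
      _ < _ := this
  · rw [hIeq]
    have := mul_lt_mul_of_pos_left upper hep
    calc Real.exp 1 * ∫ x in (0:ℝ)..1, Fk x < Real.exp 1 * Real.exp (-1) := this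
      _ = 1 := he
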